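/- Let A_1, …, A_N be real n×n matrices and τ > 0. Suppose there exist continuous functions V_i : ℝ^n → ℝ (i = 1,…,N) that are positively homogeneous of degree 2 (V_i(cx) = c² V_i(x) for all c > 0) and satisfy: (a) V_i(x) > 0 for all x ≠ 0 and all i; (b) V_i(exp(tA_i) x) < V_i(x) for all t > 0, all x ≠ 0, and all i; (c) V_j(exp(τ A_i) x) < V_i(x) for all x ≠ 0 and all i ≠ j. Then the switched system is asymptotically stable under dwell time τ: for every mode sequence i : ℕ → {1,…,N} with i(k+1) ≠ i(k), every sequence of dwell times δ_k ≥ τ, and every x_0 ∈ ℝ^n, the trajectory x_{k+1} = exp(δ_k A_{i_k}) x_k converges to 0 along the whole flow, i.e. for every ε > 0 there exists K such that for all k ≥ K and all s ∈ [0, δ_k], ‖exp(s A_{i_k}) x_k‖ < ε. -/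

import Mathlib

open Matrix NormedSpace

/-- sufficiency direction of the multiple-Lyapunov-functions
characterization of dwell-time stability, for continuous positively homogeneous
(degree 2) Lyapunov functions: if each `V_i` is positive definite, strictly
decreasing along its own mode's flow, and strictly decreasing across any mode
change after time `τ`, then the switched system is asymptotically stable under
every switching signal with dwell time at least `τ`. -/
theorem multiple_lyapunov_functions_imply_dwell_time_stability
    (n N : ℕ) (A : Fin N → Matrix (Fin n) (Fin n) ℝ) (τ : ℝ) (hτ : 0 < τ)
    (V : Fin N → (Fin n → ℝ) → ℝ)
    (hVcont : ∀ i, Continuous (V i))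
    (hVhom : ∀ i, ∀ c : ℝ, 0 < c → ∀ x : Fin n → ℝ, V i (c • x) = c ^ 2 * V i x)
    (hVpos : ∀ i, ∀ x : Fin n → ℝ, x ≠ 0 → 0 < V i x)
    (hVdec : ∀ i, ∀ t : ℝ, 0 < t → ∀ x : Fin n → ℝ, x ≠ 0 →
      V i (NormedSpace.exp (t • A i) *ᵥ x) < V i x)
    (hVjump : ∀ i j : Fin N, i ≠ j → ∀ x : Fin n → ℝ, x ≠ 0 →
      V j (NormedSpace.exp (τ • A i) *ᵥ x) < V i x) :
    ∀ (σ : ℕ → Fin N), (∀ k, σ (k + 1) ≠ σ k) →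
    ∀ (δ : ℕ → ℝ), (∀ k, τ ≤ δ k) →
    ∀ (x : ℕ → Fin n → ℝ), (∀ k, x (k + 1) = NormedSpace.exp (δ k • A (σ k)) *ᵥ x k) →
    ∀ ε > (0 : ℝ), ∃ K : ℕ, ∀ k ≥ K, ∀ s ∈ Set.Icc (0 : ℝ) (δ k),
      ‖NormedSpace.exp (s • A (σ k)) *ᵥ x k‖ < ε := by
  intro σ hσ δ hδ x hx ε hε
  -- trivial case n = 0
  rcases Nat.eq_zero_or_pos n with hn | hn
  · subst hn
    refine ⟨0, fun k _ s _ => ?_⟩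
    rw [Subsingleton.elim (NormedSpace.exp (s • A (σ k)) *ᵥ x k) 0, norm_zero]
    exact hε
  haveI : Nonempty (Fin n) := ⟨⟨0, hn⟩⟩
  haveI hNne : Nonempty (Fin N) := ⟨σ 0⟩
  -- V i 0 = 0
  have hV0 : ∀ i, V i 0 = 0 := by
    intro i
    have h := hVhom i 2 (by norm_num) 0
    rw [smul_zero] at h
    linarith
  have hVnonneg : ∀ i y, 0 ≤ V i y := by
    intro i y
    rcases eq_or_ne y 0 with h | h
    · rw [h, hV0]
    · exact (hVpos i y h).le
  -- continuity of mulVec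
  have hmvc : ∀ (M : Matrix (Fin n) (Fin n) ℝ), Continuous (fun y : Fin n → ℝ => M *ᵥ y) := by
    intro M
    have := LinearMap.continuous_of_finiteDimensional (Matrix.mulVecLin M)
    exact this
  -- sphere facts
  have hSne : (Metric.sphere (0 : Fin n → ℝ) 1).Nonempty :=
    NormedSpace.sphere_nonempty.mpr zero_le_one
  have hSc : IsCompact (Metric.sphere (0 : Fin n → ℝ) 1) := isCompact_sphere 0 1
  have hSnz : ∀ z ∈ Metric.sphere (0 : Fin n → ℝ) 1, z ≠ 0 := by
    intro z hz
    have : ‖z‖ = 1 := mem_sphere_zero_iff_norm.mp hz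
    intro h; rw [h, norm_zero] at this; norm_num at this
  -- homogeneity decomposition for nonzero x
  have hdecomp : ∀ (x₀ : Fin n → ℝ), x₀ ≠ 0 →
      ∃ c : ℝ, 0 < c ∧ ∃ u ∈ Metric.sphere (0 : Fin n → ℝ) 1, x₀ = c • u := by
    intro x₀ hx₀
    refine ⟨‖x₀‖, norm_pos_iff.mpr hx₀, ‖x₀‖⁻¹ • x₀, ?_, ?_⟩
    · rw [mem_sphere_zero_iff_norm]
      exact norm_smul_inv_norm (𝕜 := ℝ) hx₀
    · rw [smul_inv_smul₀ (norm_ne_zero_iff.mpr hx₀)]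
  -- per-pair contraction factor
  have pair : ∀ p : Fin N × Fin N, ∃ ρ : ℝ, 0 ≤ ρ ∧ ρ < 1 ∧
      (p.1 ≠ p.2 → ∀ y : Fin n → ℝ, V p.2 (NormedSpace.exp (τ • A p.1) *ᵥ y) ≤ ρ * V p.1 y) := by
    rintro ⟨i, j⟩
    by_cases hij : i = j
    · exact ⟨0, le_refl _, by norm_num, fun h => absurd hij h⟩
    · set f : (Fin n → ℝ) → ℝ :=
        fun y => V j (NormedSpace.exp (τ • A i) *ᵥ y) / V i y with hf
      have hfc : ContinuousOn f (Metric.sphere (0 : Fin n → ℝ) 1) := by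
        apply ContinuousOn.div
        · exact ((hVcont j).comp (hmvc _)).continuousOn
        · exact (hVcont i).continuousOn
        · exact fun y hy => (hVpos i y (hSnz y hy)).ne'
      obtain ⟨z, hzS, hz'⟩ := hSc.exists_isMaxOn hSne hfc
      have hz := isMaxOn_iff.mp hz'
      have hziz : z ≠ 0 := hSnz z hzS
      have hVz : 0 < V i z := hVpos i z hziz
      refine ⟨f z, ?_, ?_, ?_⟩
      · exact div_nonneg (hVnonneg _ _) hVz.le
      · rw [hf]
        exact (div_lt_one hVz).mpr (hVjump i j hij z hziz)
      · intro _ y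
        rcases eq_or_ne y 0 with h | h
        · rw [h, Matrix.mulVec_zero, hV0, hV0, mul_zero]
        · obtain ⟨c, hc, u, huS, rfl⟩ := hdecomp y h
          have hVu : 0 < V i u := hVpos i u (hSnz u huS)
          have hub : V j (NormedSpace.exp (τ • A i) *ᵥ u) ≤ f z * V i u := by
            have := hz u huS
            rw [hf] at this
            calc V j (NormedSpace.exp (τ • A i) *ᵥ u)
                = (V j (NormedSpace.exp (τ • A i) *ᵥ u) / V i u) * V i u := by
                  field_simp
              _ ≤ f z * V i u := mul_le_mul_of_nonneg_right this hVu.le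
          rw [Matrix.mulVec_smul, hVhom j c hc, hVhom i c hc]
          calc c ^ 2 * V j (NormedSpace.exp (τ • A i) *ᵥ u) ≤ c ^ 2 * (f z * V i u) := by
                exact mul_le_mul_of_nonneg_left hub (by positivity)
            _ = f z * (c ^ 2 * V i u) := by ring
  choose ρf hρ0 hρ1 hρb using pair
  set ρ : ℝ := Finset.univ.sup' (Finset.univ_nonempty) ρf with hρdef
  have hρnn : 0 ≤ ρ := le_trans (hρ0 (Classical.arbitrary _))
    (Finset.le_sup' ρf (Finset.mem_univ _))
  have hρlt : ρ < 1 := by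
    rw [hρdef, Finset.sup'_lt_iff]
    exact fun p _ => hρ1 p
  have hjump : ∀ i j : Fin N, i ≠ j → ∀ y : Fin n → ℝ,
      V j (NormedSpace.exp (τ • A i) *ᵥ y) ≤ ρ * V i y := by
    intro i j hij y
    refine le_trans (hρb (i, j) hij y) (mul_le_mul_of_nonneg_right ?_ (hVnonneg i y))
    exact Finset.le_sup' ρf (Finset.mem_univ (i, j))
  -- flow decrease (non-strict, all t ≥ 0, all x)
  have hflow : ∀ (i : Fin N) (t : ℝ), 0 ≤ t → ∀ y : Fin n → ℝ,
      V i (NormedSpace.exp (t • A i) *ᵥ y) ≤ V i y := by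
    intro i t ht y
    rcases eq_or_ne y 0 with h | h
    · rw [h, Matrix.mulVec_zero]
    · rcases eq_or_lt_of_le ht with h0 | h0
      · rw [← h0, zero_smul, exp_zero, Matrix.one_mulVec]
      · exact (hVdec i t h0 y h).le
  -- step contraction
  have hstep : ∀ k, V (σ (k+1)) (x (k+1)) ≤ ρ * V (σ k) (x k) := by
    intro k
    have hcomm : Commute ((δ k - τ) • A (σ k)) (τ • A (σ k)) :=
      ((Commute.refl (A (σ k))).smul_left _).smul_right _
    have hsplit : NormedSpace.exp (δ k • A (σ k)) = NormedSpace.exp (τ • A (σ k)) * NormedSpace.exp ((δ k - τ) • A (σ k)) := by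
      have h1 : δ k • A (σ k) = τ • A (σ k) + (δ k - τ) • A (σ k) := by
        rw [← add_smul]; ring_nf
      rw [h1]
      exact Matrix.exp_add_of_commute (τ • A (σ k)) ((δ k - τ) • A (σ k)) hcomm.symm
    have hx1 : x (k+1) = NormedSpace.exp (τ • A (σ k)) *ᵥ (NormedSpace.exp ((δ k - τ) • A (σ k)) *ᵥ x k) := by
      rw [hx k, hsplit, Matrix.mulVec_mulVec]
    calc V (σ (k+1)) (x (k+1))
        ≤ ρ * V (σ k) (NormedSpace.exp ((δ k - τ) • A (σ k)) *ᵥ x k) := by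
          rw [hx1]; exact hjump (σ k) (σ (k+1)) (hσ k).symm _
      _ ≤ ρ * V (σ k) (x k) := by
          apply mul_le_mul_of_nonneg_left _ hρnn
          exact hflow (σ k) (δ k - τ) (by linarith [hδ k]) (x k)
  -- geometric decay
  set C : ℝ := V (σ 0) (x 0) with hC
  have hCnn : 0 ≤ C := hVnonneg _ _
  have hchain : ∀ k, V (σ k) (x k) ≤ ρ ^ k * C := by
    intro k
    induction k with
    | zero => simp [hC]
    | succ k ih =>
      calc V (σ (k+1)) (x (k+1)) ≤ ρ * V (σ k) (x k) := hstep k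
        _ ≤ ρ * (ρ ^ k * C) := mul_le_mul_of_nonneg_left ih hρnn
        _ = ρ ^ (k+1) * C := by ring
  -- lower bound on V
  have lower : ∀ i : Fin N, ∃ m : ℝ, 0 < m ∧ ∀ y : Fin n → ℝ, m * ‖y‖ ^ 2 ≤ V i y := by
    intro i
    obtain ⟨z, hzS, hz'⟩ := hSc.exists_isMinOn hSne (hVcont i).continuousOn
    have hz := isMinOn_iff.mp hz'
    refine ⟨V i z, hVpos i z (hSnz z hzS), fun y => ?_⟩
    rcases eq_or_ne y 0 with h | h
    · rw [h, norm_zero, hV0]; norm_num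
    · obtain ⟨c, hc, u, huS, rfl⟩ := hdecomp y h
      rw [hVhom i c hc, norm_smul]
      have hu1 : ‖u‖ = 1 := mem_sphere_zero_iff_norm.mp huS
      rw [hu1, mul_one, Real.norm_eq_abs, sq_abs]
      calc V i z * c ^ 2 = c ^ 2 * V i z := by ring
        _ ≤ c ^ 2 * V i u := mul_le_mul_of_nonneg_left (hz u huS) (by positivity)
  choose mf hmf hmfb using lower
  set m : ℝ := Finset.univ.inf' Finset.univ_nonempty mf with hmdef
  have hm0 : 0 < m := by
    rw [hmdef, Finset.lt_inf'_iff]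
    exact fun i _ => hmf i
  have hmb : ∀ (i : Fin N) (y : Fin n → ℝ), m * ‖y‖ ^ 2 ≤ V i y := by
    intro i y
    refine le_trans (mul_le_mul_of_nonneg_right ?_ (by positivity)) (hmfb i y)
    exact Finset.inf'_le mf (Finset.mem_univ i)
  -- choose K
  obtain ⟨K, hK⟩ := exists_pow_lt_of_lt_one
    (show (0:ℝ) < m * ε ^ 2 / (C + 1) by positivity) hρlt
  have hKb : ρ ^ K * (C + 1) < m * ε ^ 2 :=
    (lt_div_iff₀ (by linarith)).mp hK
  refine ⟨K, fun k hk s hs => ?_⟩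
  have hVs : V (σ k) (NormedSpace.exp (s • A (σ k)) *ᵥ x k) ≤ ρ ^ k * C :=
    le_trans (hflow (σ k) s hs.1 (x k)) (hchain k)
  have hpow : ρ ^ k ≤ ρ ^ K := pow_le_pow_of_le_one hρnn hρlt.le hk
  have hlt : m * ‖NormedSpace.exp (s • A (σ k)) *ᵥ x k‖ ^ 2 < m * ε ^ 2 := by
    calc m * ‖NormedSpace.exp (s • A (σ k)) *ᵥ x k‖ ^ 2
        ≤ V (σ k) (NormedSpace.exp (s • A (σ k)) *ᵥ x k) := hmb _ _
      _ ≤ ρ ^ k * C := hVs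
      _ ≤ ρ ^ K * C := mul_le_mul_of_nonneg_right hpow hCnn
      _ ≤ ρ ^ K * (C + 1) := by nlinarith [pow_nonneg hρnn K]
      _ < m * ε ^ 2 := hKb
  have hsq : ‖NormedSpace.exp (s • A (σ k)) *ᵥ x k‖ ^ 2 < ε ^ 2 :=
    lt_of_mul_lt_mul_left hlt hm0.le
  exact lt_of_pow_lt_pow_left₀ 2 hε.le hsq
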